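/- Let P and Q be finite-control cache algorithms with block-independent eviction. The leak ratios r_{P,Q}(l) and r_{Q,P}(l) are in Ω(l) if and only if the difference in misses between P and Q is unbounded: ∀m ∈ ℕ, ∃t ∈ B*, |P(t) − Q(t)| > m. -/

import Mathlib

structure CacheAlg (B : Type) where
  S : Type
  init : S
  n : ℕ
  tr : S → Fin n → S
  evict : S → B → S × Fin n

variable {B : Type} [DecidableEq B]

abbrev CacheAlg.Config (P : CacheAlg B) := P.S × (Fin P.n → Option B)

noncomputable def CacheAlg.upd (P : CacheAlg B) (g : P.Config) (b : B) : P.Config :=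
  if h : ∃ j, g.2 j = some b then (P.tr g.1 h.choose, g.2)
  else ((P.evict g.1 b).1, Function.update g.2 (P.evict g.1 b).2 (some b))

noncomputable def CacheAlg.updTrace (P : CacheAlg B) (g : P.Config) : List B → P.Config
  | [] => g
  | b :: t => P.updTrace (P.upd g b) t

noncomputable def CacheAlg.missesFrom (P : CacheAlg B) (g : P.Config) : List B → ℕ
  | [] => 0
  | b :: t => (if ∃ j, g.2 j = some b then 0 else 1) + P.missesFrom (P.upd g b) t

def CacheAlg.initConfig (P : CacheAlg B) : P.Config := (P.init, fun _ => none)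

/-- Number of misses of `P` on trace `t` from the empty initial configuration. -/
noncomputable def CacheAlg.misses (P : CacheAlg B) (t : List B) : ℕ := P.missesFrom P.initConfig t

/-- The leak ratio `r_{P,Q}(l)`: supremum over sets `T` of traces of length `l`
of `|P(T)| / |Q(T)|`. -/
noncomputable def leakRatio (P Q : CacheAlg B) (l : ℕ) : ℝ :=
  sSup {r : ℝ | ∃ T : Finset (List B), T.Nonempty ∧ (∀ t ∈ T, t.length = l) ∧
    r = ((T.image P.misses).card : ℝ) / ((T.image Q.misses).card : ℝ)}

/-- Lifting of a bijection on blocks to cache contents, mapping `⊥` to `⊥`. -/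
def renameContent (π : B ≃ B) {n : ℕ} (c : Fin n → Option B) : Fin n → Option B :=
  fun j => (c j).map π

/-- Lifting of a bijection on blocks to cache configurations. -/
def CacheAlg.renameConfig (P : CacheAlg B) (π : B ≃ B) (g : P.Config) : P.Config :=
  (g.1, renameContent π g.2)

/-- The eviction function is independent of the accessed block. -/
def CacheAlg.EvictBlockIndep (P : CacheAlg B) : Prop :=
  ∀ (s : P.S) (b b' : B), P.evict s b = P.evict s b'

/-- Congruence of pairs of cache configurations via a simultaneous renaming. -/
def CacheAlg.Congruent (P Q : CacheAlg B) (x y : P.Config × Q.Config) : Prop :=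
  ∃ π : B ≃ B, P.renameConfig π x.1 = y.1 ∧ Q.renameConfig π x.2 = y.2

set_option linter.unusedSectionVars false

/-! ### Auxiliary lemmas -/

section Aux
variable {P : CacheAlg B} {π : B ≃ B}

lemma choose_eq_choose {α : Sort*} {p q : α → Prop} (h : ∃ a, p a) (h' : ∃ a, q a)
    (hpq : ∀ a, p a ↔ q a) : h.choose = h'.choose := by
  have : p = q := funext fun a => propext (hpq a)
  subst this; rfl

lemma renameContent_comp {n : ℕ} (π π' : B ≃ B) (c : Fin n → Option B) :
    renameContent π (renameContent π' c) = renameContent (π'.trans π) c := by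
  funext j; simp only [renameContent, Option.map_map]; rfl

lemma CacheAlg.renameConfig_comp (P : CacheAlg B) (π π' : B ≃ B) (g : P.Config) :
    P.renameConfig π (P.renameConfig π' g) = P.renameConfig (π'.trans π) g := by
  unfold CacheAlg.renameConfig; rw [renameContent_comp]

lemma renameContent_refl {n : ℕ} (c : Fin n → Option B) :
    renameContent (Equiv.refl B) c = c := by
  funext j; simp [renameContent]

lemma CacheAlg.renameConfig_refl (P : CacheAlg B) (g : P.Config) :
    P.renameConfig (Equiv.refl B) g = g := by
  unfold CacheAlg.renameConfig; rw [renameContent_refl]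

lemma CacheAlg.renameConfig_symm (P : CacheAlg B) (π : B ≃ B) (g : P.Config) :
    P.renameConfig π.symm (P.renameConfig π g) = g := by
  rw [renameConfig_comp, Equiv.self_trans_symm, renameConfig_refl]

lemma CacheAlg.renameConfig_symm' (P : CacheAlg B) (π : B ≃ B) (g : P.Config) :
    P.renameConfig π (P.renameConfig π.symm g) = g := by
  rw [renameConfig_comp, Equiv.symm_trans_self, renameConfig_refl]

lemma hit_rename {n : ℕ} (π : B ≃ B) (c : Fin n → Option B) (b : B) :
    (∃ j, renameContent π c j = some (π b)) ↔ (∃ j, c j = some b) := by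
  constructor
  · rintro ⟨j, hj⟩
    refine ⟨j, ?_⟩
    simp only [renameContent, Option.map_eq_some_iff] at hj
    obtain ⟨a, ha, hab⟩ := hj
    rwa [π.injective hab] at ha
  · rintro ⟨j, hj⟩; exact ⟨j, by simp [renameContent, hj]⟩

lemma CacheAlg.upd_rename (hP : P.EvictBlockIndep) (g : P.Config) (b : B) :
    P.upd (P.renameConfig π g) (π b) = P.renameConfig π (P.upd g b) := by
  unfold CacheAlg.upd
  by_cases h : ∃ j, g.2 j = some b
  · have h' : ∃ j, (P.renameConfig π g).2 j = some (π b) := (hit_rename π g.2 b).2 h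
    rw [dif_pos h', dif_pos h]
    have : h'.choose = h.choose := by
      apply choose_eq_choose
      intro j
      show renameContent π g.2 j = some (π b) ↔ _
      constructor
      · intro hj
        simp only [renameContent, Option.map_eq_some_iff] at hj
        obtain ⟨a, ha, hab⟩ := hj
        rwa [π.injective hab] at ha
      · intro hj; simp [renameContent, hj]
    rw [this]; rfl
  · have h' : ¬ ∃ j, (P.renameConfig π g).2 j = some (π b) := by
      rw [show (P.renameConfig π g).2 = renameContent π g.2 from rfl, hit_rename]; exact h
    rw [dif_neg h', dif_neg h]
    have he : P.evict g.1 (π b) = P.evict g.1 b := hP g.1 (π b) b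
    show ((P.evict (P.renameConfig π g).1 (π b)).1, _) = _
    have h1 : (P.renameConfig π g).1 = g.1 := rfl
    rw [h1, he]
    refine Prod.ext rfl ?_
    show Function.update (renameContent π g.2) (P.evict g.1 b).2 (some (π b))
      = renameContent π (Function.update g.2 (P.evict g.1 b).2 (some b))
    funext j
    by_cases hj : j = (P.evict g.1 b).2
    · subst hj; simp [renameContent]
    · simp [Function.update_of_ne hj, renameContent]

lemma CacheAlg.updTrace_rename (hP : P.EvictBlockIndep) (g : P.Config) (t : List B) :
    P.updTrace (P.renameConfig π g) (t.map π) = P.renameConfig π (P.updTrace g t) := by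
  induction t generalizing g with
  | nil => rfl
  | cons b t ih =>
    show P.updTrace (P.upd (P.renameConfig π g) (π b)) (t.map π) = _
    rw [P.upd_rename hP, ih]
    rfl

lemma CacheAlg.missesFrom_rename (hP : P.EvictBlockIndep) (g : P.Config) (t : List B) :
    P.missesFrom (P.renameConfig π g) (t.map π) = P.missesFrom g t := by
  induction t generalizing g with
  | nil => rfl
  | cons b t ih =>
    show (if ∃ j, (P.renameConfig π g).2 j = some (π b) then 0 else 1)
        + P.missesFrom (P.upd (P.renameConfig π g) (π b)) (t.map π)
      = (if ∃ j, g.2 j = some b then 0 else 1) + P.missesFrom (P.upd g b) t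
    rw [P.upd_rename hP, ih]
    congr 1
    simp only [show (P.renameConfig π g).2 = renameContent π g.2 from rfl]
    rw [if_congr (hit_rename π g.2 b) rfl rfl]

lemma CacheAlg.updTrace_append (P : CacheAlg B) (g : P.Config) (s t : List B) :
    P.updTrace g (s ++ t) = P.updTrace (P.updTrace g s) t := by
  induction s generalizing g with
  | nil => rfl
  | cons b s ih => show P.updTrace (P.upd g b) (s ++ t) = _; rw [ih]; rfl

lemma CacheAlg.missesFrom_append (P : CacheAlg B) (g : P.Config) (s t : List B) :
    P.missesFrom g (s ++ t) = P.missesFrom g s + P.missesFrom (P.updTrace g s) t := by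
  induction s generalizing g with
  | nil => simp [CacheAlg.missesFrom, CacheAlg.updTrace]
  | cons b s ih =>
    show (if _ then 0 else 1) + P.missesFrom (P.upd g b) (s ++ t) = _
    rw [ih, show P.updTrace g (b :: s) = P.updTrace (P.upd g b) s from rfl]
    show _ = (if _ then 0 else 1) + P.missesFrom (P.upd g b) s + _
    omega

lemma CacheAlg.missesFrom_le_length (P : CacheAlg B) (g : P.Config) (t : List B) :
    P.missesFrom g t ≤ t.length := by
  induction t generalizing g with
  | nil => exact le_refl 0
  | cons b t ih =>
    show (if _ then 0 else 1) + P.missesFrom (P.upd g b) t ≤ t.length + 1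
    have := ih (P.upd g b)
    split <;> omega

end Aux
section Aux2
variable {P : CacheAlg B} {π : B ≃ B}

def CacheAlg.hasBlock (P : CacheAlg B) (g : P.Config) (b : B) : Prop := ∃ j, g.2 j = some b

lemma CacheAlg.hasBlock_upd_self (P : CacheAlg B) (g : P.Config) (b : B) :
    P.hasBlock (P.upd g b) b := by
  unfold CacheAlg.upd
  by_cases h : ∃ j, g.2 j = some b
  · rw [dif_pos h]; exact h
  · rw [dif_neg h]
    exact ⟨(P.evict g.1 b).2, by simp⟩

lemma CacheAlg.upd_snd_of_hit {g : P.Config} {b : B} (h : ∃ j, g.2 j = some b) :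
    (P.upd g b).2 = g.2 := by
  unfold CacheAlg.upd; rw [dif_pos h]

lemma CacheAlg.missesFrom_replicate (P : CacheAlg B) (g : P.Config) (b : B)
    (h : P.hasBlock g b) (k : ℕ) : P.missesFrom g (List.replicate k b) = 0 := by
  induction k generalizing g with
  | zero => rfl
  | succ k ih =>
    rw [List.replicate_succ]
    show (if ∃ j, g.2 j = some b then 0 else 1) + P.missesFrom (P.upd g b) _ = 0
    simp only [CacheAlg.hasBlock] at h
    rw [if_pos h, ih (P.upd g b) (by show ∃ _, _; rw [CacheAlg.upd_snd_of_hit h]; exact h)]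

lemma CacheAlg.hasBlock_updTrace_getLast (P : CacheAlg B) (t : List B) :
    ∀ (g : P.Config) (ht : t ≠ []), P.hasBlock (P.updTrace g t) (t.getLast ht) := by
  induction t with
  | nil => intro g ht; exact absurd rfl ht
  | cons b t ih =>
    intro g ht
    rcases eq_or_ne t [] with rfl | h
    · exact P.hasBlock_upd_self g b
    · rw [List.getLast_cons h]
      exact ih (P.upd g b) h

lemma CacheAlg.hasBlock_upd (P : CacheAlg B) {g : P.Config} {b x : B}
    (h : P.hasBlock (P.upd g x) b) : P.hasBlock g b ∨ b = x := by
  unfold CacheAlg.upd at h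
  by_cases hx : ∃ j, g.2 j = some x
  · rw [dif_pos hx] at h; exact Or.inl h
  · rw [dif_neg hx] at h
    obtain ⟨j, hj⟩ := h
    have hj' : Function.update g.2 (P.evict g.1 x).2 (some x) j = some b := hj
    by_cases hje : j = (P.evict g.1 x).2
    · subst hje; simp only [Function.update_self] at hj'
      exact Or.inr (by injection hj'.symm)
    · rw [Function.update_of_ne hje] at hj'
      exact Or.inl ⟨j, hj'⟩

lemma CacheAlg.hasBlock_updTrace (P : CacheAlg B) {b : B} :
    ∀ (t : List B) (g : P.Config), P.hasBlock (P.updTrace g t) b → P.hasBlock g b ∨ b ∈ t := by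
  intro t
  induction t with
  | nil => intro g h; exact Or.inl h
  | cons x t ih =>
    intro g h
    rcases ih (P.upd g x) h with h' | h'
    · rcases P.hasBlock_upd h' with h'' | rfl
      · exact Or.inl h''
      · exact Or.inr List.mem_cons_self
    · exact Or.inr (List.mem_cons_of_mem _ h')

lemma CacheAlg.missesFrom_fresh (P : CacheAlg B) :
    ∀ (fs : List B) (g : P.Config), fs.Nodup → (∀ b ∈ fs, ¬ P.hasBlock g b) →
    P.missesFrom g fs = fs.length := by
  intro fs
  induction fs with
  | nil => intro g _ _; rfl
  | cons f fs ih =>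
    intro g hnd hav
    show (if ∃ j, g.2 j = some f then 0 else 1) + P.missesFrom (P.upd g f) fs = fs.length + 1
    rw [if_neg (show ¬ ∃ j, g.2 j = some f from hav f List.mem_cons_self)]
    rw [ih (P.upd g f) hnd.of_cons]
    · omega
    · intro b hb hcon
      rcases P.hasBlock_upd hcon with h | rfl
      · exact hav b (List.mem_cons_of_mem f hb) h
      · exact (List.nodup_cons.1 hnd).1 hb

/-- `k` renamed copies of the cycle trace `c`. -/
def iterTrace (c : List B) (π : B ≃ B) : ℕ → List B
  | 0 => []
  | k+1 => c ++ (iterTrace c π k).map π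

lemma iterTrace_length (c : List B) (π : B ≃ B) (k : ℕ) :
    (iterTrace c π k).length = k * c.length := by
  induction k with
  | zero => simp [iterTrace]
  | succ k ih => simp [iterTrace, ih]; ring

lemma CacheAlg.updTrace_iter (hP : P.EvictBlockIndep) {g : P.Config} {c : List B}
    (hc : P.updTrace g c = P.renameConfig π g) (k : ℕ) :
    P.updTrace g (iterTrace c π k) = P.renameConfig (π ^ k) g := by
  induction k with
  | zero => show g = _; rw [show (π ^ 0 : B ≃ B) = Equiv.refl B from rfl, P.renameConfig_refl]
  | succ k ih =>
    show P.updTrace g (c ++ (iterTrace c π k).map π) = _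
    rw [P.updTrace_append, hc, P.updTrace_rename hP, ih,
      P.renameConfig_comp]
    congr 1
    rw [pow_succ']
    rfl

lemma CacheAlg.missesFrom_iter (hP : P.EvictBlockIndep) {g : P.Config} {c : List B}
    (hc : P.updTrace g c = P.renameConfig π g) (k : ℕ) :
    P.missesFrom g (iterTrace c π k) = k * P.missesFrom g c := by
  induction k with
  | zero => rw [show iterTrace c π 0 = [] from rfl]; show 0 = _ ; rw [Nat.zero_mul]
  | succ k ih =>
    show P.missesFrom g (c ++ (iterTrace c π k).map π) = _
    rw [P.missesFrom_append, hc, P.missesFrom_rename hP, ih]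
    ring

end Aux2
section Canon
variable {m : ℕ}

/-- Canonical pattern of a cache content: each filled position points to the first
position holding the same block. -/
def canon (c : Fin m → Option B) : Fin m → Option (Fin m) :=
  fun i => if (c i).isSome then (List.finRange m).find? (fun j => decide (c j = c i)) else none

lemma canon_eq_none_iff (c : Fin m → Option B) (i : Fin m) :
    canon c i = none ↔ c i = none := by
  unfold canon
  constructor
  · intro h
    by_contra hne
    have hs : (c i).isSome := Option.ne_none_iff_isSome.1 hne
    rw [if_pos hs] at h
    rw [List.find?_eq_none] at h
    exact (by simp : ¬ (decide (c i = c i) = true → False))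
      (fun hd => h i (List.mem_finRange i) hd)
  · intro h; rw [if_neg (by simp [h])]

lemma canon_spec {c : Fin m → Option B} {i k : Fin m} (h : canon c i = some k) :
    c k = c i := by
  unfold canon at h
  split at h
  · have := List.find?_some h
    exact of_decide_eq_true this
  · exact absurd h (by simp)

lemma canon_eq_of_content_eq {c : Fin m → Option B} {i j : Fin m} (h : c i = c j) :
    canon c i = canon c j := by
  unfold canon; rw [h]

lemma canon_some_of_isSome {c : Fin m → Option B} {i : Fin m} (h : (c i).isSome) :
    ∃ k, canon c i = some k := by
  rw [← Option.isSome_iff_exists, ← Option.ne_none_iff_isSome]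
  intro hn
  rw [canon_eq_none_iff] at hn
  rw [hn] at h; exact absurd h (by simp)

/-- From equality of canonical patterns: equalities of entries transfer. -/
lemma canon_transfer {c c' : Fin m → Option B} (h : canon c = canon c')
    {i j : Fin m} (hij : c i = c j) : c' i = c' j := by
  rcases hn : c i with _ | b
  · rw [hn] at hij
    have h1 : c' i = none := by rw [← canon_eq_none_iff, ← congrFun h i, canon_eq_none_iff]; exact hn
    have h2 : c' j = none := by
      rw [← canon_eq_none_iff, ← congrFun h j, canon_eq_none_iff]; exact hij.symm
    rw [h1, h2]
  · have hs : (c i).isSome := by rw [hn]; rfl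
    obtain ⟨k, hk⟩ := canon_some_of_isSome hs
    have hkj : canon c j = some k := by rw [← canon_eq_of_content_eq hij, hk]
    have h1 : canon c' i = some k := by rw [← congrFun h i, hk]
    have h2 : canon c' j = some k := by rw [← congrFun h j, hkj]
    rw [← canon_spec h1, ← canon_spec h2]

lemma canon_map (π : B ≃ B) (c : Fin m → Option B) :
    canon (fun i => (c i).map π) = canon c := by
  funext i
  unfold canon
  have h1 : ((c i).map π).isSome = (c i).isSome := by cases hci : c i <;> simp [hci]
  rw [h1]
  congr 1
  have : (fun j => decide ((c j).map π = (c i).map π)) = fun j => decide (c j = c i) := by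
    funext j
    exact decide_eq_decide.2 (Option.map_injective π.injective).eq_iff
  rw [this]

/-- Realize equal canonical patterns by a block renaming. -/
lemma canon_realize [Infinite B] {c c' : Fin m → Option B} (h : canon c = canon c') :
    ∃ π : B ≃ B, ∀ i, (c i).map π = c' i := by
  classical
  set s : Set B := Option.some ⁻¹' Set.range c with hs
  have hsfin : s.Finite := (Set.finite_range c).preimage (Option.some_injective B).injOn
  have hslt : Cardinal.mk s < Cardinal.mk B :=
    lt_of_lt_of_le hsfin.lt_aleph0 (Cardinal.aleph0_le_mk B)
  have hmem : ∀ b : s, ∃ i, c i = some b.1 := by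
    rintro ⟨b, hb⟩; exact hb
  have hnone : ∀ i, c i = none ↔ c' i = none := by
    intro i
    rw [← canon_eq_none_iff c i, ← canon_eq_none_iff c' i, congrFun h i]
  have hnotnone : ∀ (b : s), c' (hmem b).choose ≠ none := by
    intro b hn
    have h2 := (hnone _).2 hn
    rw [(hmem b).choose_spec] at h2
    exact Option.some_ne_none _ h2
  set f : s → B := fun b => (c' (hmem b).choose).getD b.1 with hf
  have hfspec : ∀ b : s, c' (hmem b).choose = some (f b) := by
    intro b
    rcases ho : c' (hmem b).choose with _ | b'
    · exact absurd ho (hnotnone b)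
    · show _ = some ((c' (hmem b).choose).getD b.1)
      rw [ho]; rfl
  have key : ∀ (b : s) (i : Fin m), c i = some b.1 → c' i = some (f b) := by
    intro b i hi
    have hib : c i = c (hmem b).choose := by rw [hi, (hmem b).choose_spec]
    have h1 : c' i = c' (hmem b).choose := canon_transfer h hib
    rw [h1, hfspec b]
  have hinj : Function.Injective f := by
    rintro b1 b2 hb
    have hc1 := hfspec b1
    have hc2 := hfspec b2
    rw [hb] at hc1
    have : c' (hmem b1).choose = c' (hmem b2).choose := by rw [hc1, hc2]
    have hcc : c (hmem b1).choose = c (hmem b2).choose := canon_transfer h.symm this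
    rw [(hmem b1).choose_spec, (hmem b2).choose_spec] at hcc
    exact Subtype.ext (by injection hcc)
  obtain ⟨π, hπ⟩ := Cardinal.extend_function_of_lt ⟨f, hinj⟩ hslt ⟨Equiv.refl B⟩
  refine ⟨π, fun i => ?_⟩
  rcases hi : c i with _ | b
  · simp only [Option.map_none]
    exact ((hnone i).1 hi).symm
  · have hbs : b ∈ s := ⟨i, hi⟩
    simp only [Option.map_some]
    rw [hπ ⟨b, hbs⟩]
    exact (key ⟨b, hbs⟩ i hi).symm
section Joint
variable (P Q : CacheAlg B)

noncomputable def jointUpd (γ : P.Config × Q.Config) (t : List B) : P.Config × Q.Config :=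
  (P.updTrace γ.1 t, Q.updTrace γ.2 t)

def jointRename (π : B ≃ B) (γ : P.Config × Q.Config) : P.Config × Q.Config :=
  (P.renameConfig π γ.1, Q.renameConfig π γ.2)

noncomputable def jointMisses (γ : P.Config × Q.Config) (t : List B) : ℕ × ℕ :=
  (P.missesFrom γ.1 t, Q.missesFrom γ.2 t)

def jointInit : P.Config × Q.Config := (P.initConfig, Q.initConfig)

abbrev ShapeT := P.S × Q.S × (Fin (P.n + Q.n) → Option (Fin (P.n + Q.n)))

def jointContent (γ : P.Config × Q.Config) : Fin (P.n + Q.n) → Option B :=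
  fun i => Sum.elim γ.1.2 γ.2.2 (finSumFinEquiv.symm i)

def jshape (γ : P.Config × Q.Config) : ShapeT P Q :=
  (γ.1.1, γ.2.1, canon (jointContent P Q γ))

variable {P Q}

lemma jointUpd_append (γ : P.Config × Q.Config) (s t : List B) :
    jointUpd P Q γ (s ++ t) = jointUpd P Q (jointUpd P Q γ s) t := by
  unfold jointUpd; rw [P.updTrace_append, Q.updTrace_append]

lemma jointUpd_rename (hP : P.EvictBlockIndep) (hQ : Q.EvictBlockIndep) (π : B ≃ B)
    (γ : P.Config × Q.Config) (t : List B) :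
    jointUpd P Q (jointRename P Q π γ) (t.map π) = jointRename P Q π (jointUpd P Q γ t) := by
  unfold jointUpd jointRename
  rw [P.updTrace_rename hP, Q.updTrace_rename hQ]

lemma jointRename_symm (π : B ≃ B) (γ : P.Config × Q.Config) :
    jointRename P Q π.symm (jointRename P Q π γ) = γ := by
  unfold jointRename
  rw [P.renameConfig_symm, Q.renameConfig_symm]

lemma jointContent_rename (π : B ≃ B) (γ : P.Config × Q.Config) :
    jointContent P Q (jointRename P Q π γ) = fun i => (jointContent P Q γ i).map π := by
  funext i
  unfold jointContent jointRename
  rcases hi : finSumFinEquiv.symm i with j | j <;> simp [CacheAlg.renameConfig, renameContent, hi]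

lemma jshape_rename (π : B ≃ B) (γ : P.Config × Q.Config) :
    jshape P Q (jointRename P Q π γ) = jshape P Q γ := by
  unfold jshape
  refine congrArg₂ _ rfl (congrArg₂ _ rfl ?_)
  rw [jointContent_rename, canon_map]

lemma jshape_realize [Infinite B] {γ γ' : P.Config × Q.Config}
    (h : jshape P Q γ = jshape P Q γ') : ∃ π : B ≃ B, jointRename P Q π γ = γ' := by
  obtain ⟨h1, h2, h3⟩ : γ.1.1 = γ'.1.1 ∧ γ.2.1 = γ'.2.1 ∧
      canon (jointContent P Q γ) = canon (jointContent P Q γ') := by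
    unfold jshape at h
    exact ⟨congrArg (·.1) h, congrArg (·.2.1) h, congrArg (·.2.2) h⟩
  obtain ⟨π, hπ⟩ := canon_realize h3
  refine ⟨π, ?_⟩
  unfold jointRename
  have hPc : ∀ j : Fin P.n, (γ.1.2 j).map π = γ'.1.2 j := by
    intro j
    have := hπ (finSumFinEquiv (Sum.inl j))
    simpa [jointContent, Equiv.symm_apply_apply] using this
  have hQc : ∀ j : Fin Q.n, (γ.2.2 j).map π = γ'.2.2 j := by
    intro j
    have := hπ (finSumFinEquiv (Sum.inr j))
    simpa [jointContent, Equiv.symm_apply_apply] using this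
  have e1 : P.renameConfig π γ.1 = γ'.1 := by
    unfold CacheAlg.renameConfig
    exact Prod.ext h1 (funext hPc)
  have e2 : Q.renameConfig π γ.2 = γ'.2 := by
    unfold CacheAlg.renameConfig
    exact Prod.ext h2 (funext hQc)
  rw [e1, e2]

lemma exists_jshape_repeat [Finite P.S] [Finite Q.S] (f : ℕ → ShapeT P Q) :
    ∃ i j : ℕ, i < j ∧ j ≤ Nat.card (ShapeT P Q) ∧ f i = f j := by
  set N := Nat.card (ShapeT P Q) with hN
  have hninj : ¬ Function.Injective (fun x : Fin (N + 1) => f x.1) := by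
    intro hinj
    have hle := Nat.card_le_card_of_injective _ hinj
    rw [Nat.card_eq_fintype_card, Fintype.card_fin] at hle
    omega
  rw [Function.not_injective_iff] at hninj
  obtain ⟨a, b, hab, hne⟩ := hninj
  rcases lt_or_gt_of_ne (fun h => hne (Fin.ext h) : (a : ℕ) ≠ b) with hlt | hlt
  · exact ⟨a, b, hlt, by omega, hab⟩
  · exact ⟨b, a, hlt, by omega, hab.symm⟩

end Joint
section Excision
variable (P Q : CacheAlg B)

noncomputable def jcfg (t : List B) (k : ℕ) : P.Config × Q.Config :=
  jointUpd P Q (jointInit P Q) (t.take k)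

noncomputable def Dm (t : List B) : ℤ := (P.misses t : ℤ) - (Q.misses t : ℤ)

def AllDiag (t : List B) : Prop :=
  ∀ i j : ℕ, i < j → j ≤ t.length →
    jshape P Q (jcfg P Q t i) = jshape P Q (jcfg P Q t j) →
    Dm P Q (t.take j) = Dm P Q (t.take i)

variable {P Q}

lemma Dm_abs_le_length (t : List B) : (Dm P Q t).natAbs ≤ t.length := by
  have h1 : P.misses t ≤ t.length := P.missesFrom_le_length _ t
  have h2 : Q.misses t ≤ t.length := Q.missesFrom_le_length _ t
  unfold Dm; omega

lemma jcfg_eq (t : List B) (k : ℕ) :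
    jcfg P Q t k = (P.updTrace P.initConfig (t.take k), Q.updTrace Q.initConfig (t.take k)) := rfl

lemma Dm_take_add (t : List B) (j r : ℕ) :
    Dm P Q (t.take (j + r)) =
      Dm P Q (t.take j) + ((P.missesFrom (jcfg P Q t j).1 ((t.drop j).take r) : ℤ)
        - (Q.missesFrom (jcfg P Q t j).2 ((t.drop j).take r) : ℤ)) := by
  unfold Dm CacheAlg.misses
  rw [List.take_add, P.missesFrom_append, Q.missesFrom_append]
  simp only [jcfg, jointUpd, jointInit]
  push_cast
  ring

lemma exc_main [Infinite B] [Finite P.S] [Finite Q.S]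
    (hP : P.EvictBlockIndep) (hQ : Q.EvictBlockIndep) :
    ∀ (n : ℕ) (t : List B), t.length ≤ n → AllDiag P Q t →
    (Dm P Q t).natAbs ≤ Nat.card (ShapeT P Q) := by
  intro n
  induction n with
  | zero =>
    intro t ht _
    exact le_trans (Dm_abs_le_length t) (le_trans ht (Nat.zero_le _))
  | succ n ih =>
    intro t htlen hdiag
    set N := Nat.card (ShapeT P Q) with hN
    by_cases hshort : t.length ≤ N
    · exact le_trans (Dm_abs_le_length t) hshort
    push_neg at hshort
    obtain ⟨i, j, hij, hjN, hsh⟩ := exists_jshape_repeat (fun k => jshape P Q (jcfg P Q t k))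
    have hjle : j ≤ t.length := le_of_lt (lt_of_le_of_lt hjN hshort)
    have hile : i ≤ t.length := le_trans (le_of_lt hij) hjle
    obtain ⟨π, hπ⟩ := jshape_realize hsh
    -- the shortened trace
    set t' : List B := t.take i ++ (t.drop j).map π.symm with ht'
    have hlen' : t'.length = i + (t.length - j) := by
      rw [ht', List.length_append, List.length_take, List.length_map, List.length_drop,
        min_eq_left hile]
    have hcfg_i : jcfg P Q t i = jointRename P Q π.symm (jcfg P Q t j) := by
      rw [← hπ, jointRename_symm]
    -- prefix facts
    have htake0 : ∀ k, k ≤ i → t'.take k = t.take k := by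
      intro k hk
      rw [ht', List.take_append_of_le_length (by rw [List.length_take, min_eq_left hile]; exact hk),
        List.take_take, min_eq_left hk]
    have hcfg0 : ∀ k, k ≤ i → jcfg P Q t' k = jcfg P Q t k := by
      intro k hk; unfold jcfg; rw [htake0 k hk]
    -- suffix facts
    have htakeS : ∀ r, t'.take (i + r) = t.take i ++ ((t.drop j).take r).map π.symm := by
      intro r
      have hh : i + r = (t.take i).length + r := by rw [List.length_take, min_eq_left hile]
      rw [ht', hh, List.take_append]
      simp [List.map_take]
    have hcfgS : ∀ r, jcfg P Q t' (i + r) = jointRename P Q π.symm (jcfg P Q t (j + r)) := by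
      intro r
      unfold jcfg
      rw [htakeS r, List.take_add]
      rw [jointUpd_append, jointUpd_append]
      show jointUpd P Q (jcfg P Q t i) _ = _
      rw [hcfg_i, jointUpd_rename hP hQ]
      rfl
    have hDmS : ∀ r, Dm P Q (t'.take (i + r))
        = Dm P Q (t.take i) + (Dm P Q (t.take (j + r)) - Dm P Q (t.take j)) := by
      intro r
      have e1 : Dm P Q (t'.take (i+r)) = Dm P Q (t'.take i)
          + ((P.missesFrom (jcfg P Q t' i).1 ((t'.drop i).take r) : ℤ)
            - (Q.missesFrom (jcfg P Q t' i).2 ((t'.drop i).take r) : ℤ)) := Dm_take_add t' i r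
      have hdrop : (t'.drop i).take r = ((t.drop j).take r).map π.symm := by
        have hd : t'.drop i = (t.drop j).map π.symm := by
          rw [ht']
          have h0 : List.drop (t.take i).length (t.take i ++ (t.drop j).map π.symm) = (t.drop j).map π.symm := List.drop_left
          rwa [List.length_take, min_eq_left hile] at h0
        rw [hd]
        simp [List.map_take]
      rw [e1, htake0 i le_rfl, hcfg0 i le_rfl, hdrop, hcfg_i]
      have eP : P.missesFrom ((jointRename P Q π.symm (jcfg P Q t j)).1)
            (((t.drop j).take r).map π.symm) = P.missesFrom ((jcfg P Q t j).1) ((t.drop j).take r) := by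
        show P.missesFrom (P.renameConfig π.symm _) _ = _
        rw [P.missesFrom_rename hP]
      have eQ : Q.missesFrom ((jointRename P Q π.symm (jcfg P Q t j)).2)
            (((t.drop j).take r).map π.symm) = Q.missesFrom ((jcfg P Q t j).2) ((t.drop j).take r) := by
        show Q.missesFrom (Q.renameConfig π.symm _) _ = _
        rw [Q.missesFrom_rename hQ]
      rw [eP, eQ, Dm_take_add t j r]
      ring
    have hexc : Dm P Q (t.take j) = Dm P Q (t.take i) := hdiag i j hij hjle hsh
    -- value preserved
    have hDm' : Dm P Q t' = Dm P Q t := by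
      have h1 : t'.take (i + (t.length - j)) = t' := by
        rw [← hlen']; exact List.take_length
      have h2 := hDmS (t.length - j)
      rw [h1] at h2
      rw [h2, hexc]
      have : j + (t.length - j) = t.length := by omega
      rw [this, List.take_length]
      ring
    -- AllDiag preserved
    have hdiag' : AllDiag P Q t' := by
      intro k k' hkk' hk'le hsh'
      rcases le_or_gt k' i with hk'i | hik'
      · -- both in prefix
        rw [htake0 k (le_trans (le_of_lt hkk') hk'i), htake0 k' hk'i]
        rw [hcfg0 k (le_trans (le_of_lt hkk') hk'i), hcfg0 k' hk'i] at hsh'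
        exact hdiag k k' hkk' (le_trans hk'i hile) hsh'
      · have hr' : k' = i + (k' - i) := by omega
        have hshk' : jshape P Q (jcfg P Q t' k') = jshape P Q (jcfg P Q t (j + (k' - i))) := by
          rw [hr', hcfgS, jshape_rename, Nat.add_sub_cancel_left]
        have hk'bound : j + (k' - i) ≤ t.length := by
          rw [hlen'] at hk'le; omega
        rcases le_or_gt k i with hki | hik
        · -- k in prefix, k' in suffix
          rw [hcfg0 k hki] at hsh'
          have := hdiag k (j + (k' - i)) (by omega) hk'bound (hsh'.trans hshk')
          rw [htake0 k hki, hr', hDmS, hexc, this]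
          ring
        · -- both in suffix
          have hrk : k = i + (k - i) := by omega
          have hshk : jshape P Q (jcfg P Q t' k) = jshape P Q (jcfg P Q t (j + (k - i))) := by
            rw [hrk, hcfgS, jshape_rename, Nat.add_sub_cancel_left]
          have := hdiag (j + (k - i)) (j + (k' - i)) (by omega) hk'bound
            ((hshk.symm.trans hsh').trans hshk')
          rw [hr', hDmS]
          conv_rhs => rw [hrk, hDmS]
          rw [this]
    -- shorter
    have hlt : t'.length ≤ n := by
      rw [hlen'] at *
      omega
    rw [← hDm']
    exact ih t' hlt hdiag'

end Excision
/-- Existence of two compatible pumping cycles with non-proportional miss counts. -/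
def Hyp (P Q : CacheAlg B) : Prop :=
  ∃ (u c1 w c2 : List B) (π1 π2 : B ≃ B),
    c1 ≠ [] ∧
    P.updTrace (P.updTrace P.initConfig u) c1 = P.renameConfig π1 (P.updTrace P.initConfig u) ∧
    Q.updTrace (Q.updTrace Q.initConfig u) c1 = Q.renameConfig π1 (Q.updTrace Q.initConfig u) ∧
    P.updTrace (P.updTrace P.initConfig (u ++ c1 ++ w)) c2
      = P.renameConfig π2 (P.updTrace P.initConfig (u ++ c1 ++ w)) ∧
    Q.updTrace (Q.updTrace Q.initConfig (u ++ c1 ++ w)) c2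
      = Q.renameConfig π2 (Q.updTrace Q.initConfig (u ++ c1 ++ w)) ∧
    (P.missesFrom (P.updTrace P.initConfig u) c1)
        * (Q.missesFrom (Q.updTrace Q.initConfig (u ++ c1 ++ w)) c2)
      ≠ (P.missesFrom (P.updTrace P.initConfig (u ++ c1 ++ w)) c2)
        * (Q.missesFrom (Q.updTrace Q.initConfig u) c1)

lemma Hyp.symm {P Q : CacheAlg B} (h : Hyp P Q) : Hyp Q P := by
  obtain ⟨u, c1, w, c2, π1, π2, h0, h1, h2, h3, h4, h5⟩ := h
  refine ⟨u, c1, w, c2, π1, π2, h0, h2, h1, h4, h3, ?_⟩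
  intro hcon
  exact h5 (by rw [mul_comm] at hcon ⊢; omega)

lemma hyp_of_unbounded (P Q : CacheAlg B) [Infinite B] [Finite P.S] [Finite Q.S]
    (hP : P.EvictBlockIndep) (hQ : Q.EvictBlockIndep)
    (h : ∀ m : ℕ, ∃ t : List B, (m : ℤ) < |(P.misses t : ℤ) - (Q.misses t : ℤ)|) :
    Hyp P Q := by
  classical
  set N := Nat.card (ShapeT P Q) with hNdef
  obtain ⟨t, ht⟩ := h N
  have hnd : ¬ AllDiag P Q t := by
    intro hd
    have hle := exc_main hP hQ t.length t le_rfl hd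
    have : |(P.misses t : ℤ) - (Q.misses t : ℤ)| = ((Dm P Q t).natAbs : ℤ) := by
      unfold Dm; rw [Int.abs_eq_natAbs]
    rw [this] at ht
    omega
  unfold AllDiag at hnd
  push_neg at hnd
  obtain ⟨i, j, hij, hjle, hsh, hne⟩ := hnd
  obtain ⟨π1, hπ1⟩ := jshape_realize hsh
  have hile : i ≤ t.length := le_trans hij.le hjle
  set u := t.take i with hu
  set c1 := (t.drop i).take (j - i) with hc1
  have hsplit : t.take j = u ++ c1 := by
    rw [hu, hc1, ← List.take_add, Nat.add_sub_cancel' hij.le]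
  have hc1len : c1.length = j - i := by
    rw [hc1, List.length_take, List.length_drop, min_eq_left (by omega)]
  have hc1ne : c1 ≠ [] := List.ne_nil_of_length_pos (by omega)
  -- cycle 1 equalities
  have hcyc1 : jointUpd P Q (jointUpd P Q (jointInit P Q) u) c1
      = jointRename P Q π1 (jointUpd P Q (jointInit P Q) u) := by
    rw [← jointUpd_append, ← hsplit]
    show jcfg P Q t j = _
    rw [← hπ1]
    rfl
  -- the fresh blocks
  set γ2 : P.Config × Q.Config := jcfg P Q t j with hγ2
  set S : Set B := {b | P.hasBlock γ2.1 b ∨ Q.hasBlock γ2.2 b} with hS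
  have hSfin : S.Finite := by
    have h1 : S ⊆ Option.some ⁻¹' (Set.range γ2.1.2 ∪ Set.range γ2.2.2) := by
      rintro b (⟨k, hk⟩ | ⟨k, hk⟩)
      · exact Or.inl ⟨k, hk⟩
      · exact Or.inr ⟨k, hk⟩
    exact Set.Finite.subset (((Set.finite_range _).union (Set.finite_range _)).preimage
      (Option.some_injective B).injOn) h1
  obtain ⟨F, hFsub, hFcard⟩ := hSfin.infinite_compl.exists_subset_card_eq (N + 1)
  set fs := F.toList with hfs
  have hfsnd : fs.Nodup := F.nodup_toList
  have hfslen : fs.length = N + 1 := by rw [hfs, Finset.length_toList, hFcard]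
  have hfsout : ∀ b ∈ fs, ¬ P.hasBlock γ2.1 b ∧ ¬ Q.hasBlock γ2.2 b := by
    intro b hb
    have : b ∈ Sᶜ := hFsub (by rwa [Finset.mem_coe, ← Finset.mem_toList])
    simp only [Set.mem_compl_iff, hS, Set.mem_setOf_eq, not_or] at this
    exact this
  -- pigeonhole along the fresh run
  obtain ⟨a, b, hab, hbN, hshab⟩ :=
    exists_jshape_repeat (fun r => jshape P Q (jointUpd P Q γ2 (fs.take r)))
  obtain ⟨π2, hπ2⟩ := jshape_realize hshab
  set w := fs.take a with hw
  set c2 := (fs.drop a).take (b - a) with hc2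
  have hc2len : c2.length = b - a := by
    rw [hc2, List.length_take, List.length_drop, min_eq_left (by omega)]
  have htakeb : fs.take b = w ++ c2 := by
    rw [hw, hc2, ← List.take_add, Nat.add_sub_cancel' hab.le]
  -- fresh misses
  have hfresh : ∀ x ∈ c2, ¬ P.hasBlock (P.updTrace γ2.1 w) x ∧
      ¬ Q.hasBlock (Q.updTrace γ2.2 w) x := by
    intro x hx
    have hxfs : x ∈ fs := by
      have h1 : x ∈ fs.drop a := List.mem_of_mem_take hx
      exact List.mem_of_mem_drop h1
    have hxnw : x ∉ w := by
      intro hxw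
      exact (List.disjoint_take_drop hfsnd le_rfl) hxw (List.mem_of_mem_take hx)
    constructor
    · intro hcon
      rcases P.hasBlock_updTrace w γ2.1 hcon with h1 | h1
      · exact (hfsout x hxfs).1 h1
      · exact hxnw h1
    · intro hcon
      rcases Q.hasBlock_updTrace w γ2.2 hcon with h1 | h1
      · exact (hfsout x hxfs).2 h1
      · exact hxnw h1
  have hc2nd : c2.Nodup := ((List.take_sublist _ _).trans (List.drop_sublist _ _)).nodup hfsnd
  have hp2 : P.missesFrom (P.updTrace γ2.1 w) c2 = b - a :=
    (P.missesFrom_fresh c2 _ hc2nd (fun x hx => (hfresh x hx).1)).trans hc2len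
  have hq2 : Q.missesFrom (Q.updTrace γ2.2 w) c2 = b - a :=
    (Q.missesFrom_fresh c2 _ hc2nd (fun x hx => (hfresh x hx).2)).trans hc2len
  -- assemble
  have hbase : jointUpd P Q (jointInit P Q) (u ++ c1 ++ w) = jointUpd P Q γ2 w := by
    rw [jointUpd_append, ← hsplit]
    rfl
  have hcyc2 : jointUpd P Q (jointUpd P Q (jointInit P Q) (u ++ c1 ++ w)) c2
      = jointRename P Q π2 (jointUpd P Q (jointInit P Q) (u ++ c1 ++ w)) := by
    rw [hbase, ← jointUpd_append, ← htakeb, ← hπ2]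
  have hPbase : P.updTrace P.initConfig (u ++ c1 ++ w) = P.updTrace γ2.1 w :=
    congrArg Prod.fst hbase
  have hQbase : Q.updTrace Q.initConfig (u ++ c1 ++ w) = Q.updTrace γ2.2 w :=
    congrArg Prod.snd hbase
  have hp1q1 : P.missesFrom (P.updTrace P.initConfig u) c1
      ≠ Q.missesFrom (Q.updTrace Q.initConfig u) c1 := by
    intro hcon
    apply hne
    unfold Dm CacheAlg.misses
    rw [hsplit, P.missesFrom_append, Q.missesFrom_append]
    push_cast
    omega
  refine ⟨u, c1, w, c2, π1, π2, hc1ne, ?_, ?_, ?_, ?_, ?_⟩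
  · exact congrArg Prod.fst hcyc1
  · exact congrArg Prod.snd hcyc1
  · exact congrArg Prod.fst hcyc2
  · exact congrArg Prod.snd hcyc2
  · rw [hPbase, hQbase, hp2, hq2]
    intro hcon
    apply hp1q1
    have h1 : 0 < b - a := by omega
    have h2 : (b - a) * P.missesFrom (P.updTrace P.initConfig u) c1
        = (b - a) * Q.missesFrom (Q.updTrace Q.initConfig u) c1 := by
      rw [Nat.mul_comm (b-a)]
      omega
    exact Nat.eq_of_mul_eq_mul_left h1 h2

section Pump
variable {P : CacheAlg B}

lemma rename_pow_succ (R : CacheAlg B) (π : B ≃ B) (a : ℕ) (g : R.Config) :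
    R.renameConfig (π ^ (a+1)) g = R.renameConfig (π ^ a) (R.renameConfig π g) := by
  rw [R.renameConfig_comp]
  congr 1
  rw [pow_succ]
  rfl

lemma count_main (R : CacheAlg B) (hR : R.EvictBlockIndep) (u c1 w c2 : List B) (π1 π2 : B ≃ B)
    (h1 : R.updTrace (R.updTrace R.initConfig u) c1 = R.renameConfig π1 (R.updTrace R.initConfig u))
    (h2 : R.updTrace (R.updTrace R.initConfig (u ++ c1 ++ w)) c2
      = R.renameConfig π2 (R.updTrace R.initConfig (u ++ c1 ++ w))) (a b : ℕ) :
    R.misses (u ++ iterTrace c1 π1 (a+1) ++ (w ++ iterTrace c2 π2 b).map (π1 ^ a))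
      = R.misses (u ++ c1 ++ w)
        + a * R.missesFrom (R.updTrace R.initConfig u) c1
        + b * R.missesFrom (R.updTrace R.initConfig (u ++ c1 ++ w)) c2 := by
  set g0 := R.updTrace R.initConfig u with hg0
  set g1 := R.updTrace R.initConfig (u ++ c1 ++ w) with hg1
  have hg1' : g1 = R.updTrace (R.updTrace g0 c1) w := by
    rw [hg1, R.updTrace_append, R.updTrace_append]
  unfold CacheAlg.misses
  rw [R.missesFrom_append, R.missesFrom_append, R.updTrace_append]
  rw [R.missesFrom_iter hR h1 (a+1), R.updTrace_iter hR h1 (a+1)]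
  rw [rename_pow_succ, ← h1]
  rw [List.map_append]
  rw [R.missesFrom_append]
  have e1 : R.missesFrom (R.renameConfig (π1 ^ a) (R.updTrace g0 c1)) (w.map ⇑(π1 ^ a))
      = R.missesFrom (R.updTrace g0 c1) w := R.missesFrom_rename hR _ _
  have e2 : R.updTrace (R.renameConfig (π1 ^ a) (R.updTrace g0 c1)) (w.map ⇑(π1 ^ a))
      = R.renameConfig (π1 ^ a) g1 := by
    rw [R.updTrace_rename hR, hg1']
  rw [e1, e2]
  have e3 : R.missesFrom (R.renameConfig (π1 ^ a) g1) ((iterTrace c2 π2 b).map ⇑(π1 ^ a))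
      = R.missesFrom g1 (iterTrace c2 π2 b) := R.missesFrom_rename hR _ _
  rw [e3, R.missesFrom_iter hR h2 b]
  rw [R.missesFrom_append, R.missesFrom_append, R.updTrace_append]
  ring

lemma length_main (u c1 w c2 : List B) (π1 π2 : B ≃ B) (a b : ℕ) :
    (u ++ iterTrace c1 π1 (a+1) ++ (w ++ iterTrace c2 π2 b).map (π1 ^ a)).length
      = (u ++ c1 ++ w).length + a * c1.length + b * c2.length := by
  simp [iterTrace_length]
  ring

end Pump
section Construction
variable {P Q : CacheAlg B}

lemma leakRatio_elt_le {l : ℕ} {r : ℝ}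
    (hr : r ∈ {r : ℝ | ∃ T : Finset (List B), T.Nonempty ∧ (∀ t ∈ T, t.length = l) ∧
      r = ((T.image P.misses).card : ℝ) / ((T.image Q.misses).card : ℝ)}) :
    r ≤ (l : ℝ) + 1 := by
  obtain ⟨T, hTne, hTlen, rfl⟩ := hr
  have h1 : 1 ≤ (T.image Q.misses).card := Finset.card_pos.2 (hTne.image _)
  have h2 : (T.image P.misses).card ≤ l + 1 := by
    have hsub : T.image P.misses ⊆ Finset.range (l + 1) := by
      intro x hx
      obtain ⟨t, htT, rfl⟩ := Finset.mem_image.1 hx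
      rw [Finset.mem_range]
      have h3 := P.missesFrom_le_length P.initConfig t
      rw [hTlen t htT] at h3
      show P.missesFrom P.initConfig t < l + 1
      omega
    calc (T.image P.misses).card ≤ (Finset.range (l+1)).card := Finset.card_le_card hsub
      _ = l + 1 := Finset.card_range _
  calc ((T.image P.misses).card : ℝ) / ((T.image Q.misses).card : ℝ)
      ≤ ((T.image P.misses).card : ℝ) := by
        apply div_le_self (Nat.cast_nonneg _)
        exact_mod_cast h1
    _ ≤ (l : ℝ) + 1 := by exact_mod_cast h2

lemma leakRatio_bddAbove (P Q : CacheAlg B) (l : ℕ) :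
    BddAbove {r : ℝ | ∃ T : Finset (List B), T.Nonempty ∧ (∀ t ∈ T, t.length = l) ∧
      r = ((T.image P.misses).card : ℝ) / ((T.image Q.misses).card : ℝ)} :=
  ⟨(l : ℝ) + 1, fun _ hr => leakRatio_elt_le hr⟩

lemma one_mem_leakRatio_set (P Q : CacheAlg B) [Nonempty B] (l : ℕ) :
    (1 : ℝ) ∈ {r : ℝ | ∃ T : Finset (List B), T.Nonempty ∧ (∀ t ∈ T, t.length = l) ∧
      r = ((T.image P.misses).card : ℝ) / ((T.image Q.misses).card : ℝ)} := by
  obtain ⟨b⟩ := ‹Nonempty B›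
  refine ⟨{List.replicate l b}, Finset.singleton_nonempty _, ?_, ?_⟩
  · intro t ht
    rw [Finset.mem_singleton] at ht
    rw [ht, List.length_replicate]
  · rw [Finset.image_singleton, Finset.image_singleton, Finset.card_singleton]
    norm_num

lemma isBigO_of_hyp [Infinite B] (hP : P.EvictBlockIndep) (hQ : Q.EvictBlockIndep)
    (h : Hyp P Q) : (fun l : ℕ => (l : ℝ)) =O[Filter.atTop] (leakRatio P Q) := by
  classical
  obtain ⟨u, c1, w, c2, π1, π2, hc1ne, hP1, hQ1, hP2, hQ2, hdet⟩ := h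
  set p1 := P.missesFrom (P.updTrace P.initConfig u) c1 with hp1
  set q1 := Q.missesFrom (Q.updTrace Q.initConfig u) c1 with hq1
  set p2 := P.missesFrom (P.updTrace P.initConfig (u ++ c1 ++ w)) c2 with hp2
  set q2 := Q.missesFrom (Q.updTrace Q.initConfig (u ++ c1 ++ w)) c2 with hq2
  set L0 := (u ++ c1 ++ w).length with hL0
  set M := q2 * c1.length + q1 * c2.length with hM
  have hc1pos : 0 < c1.length := List.length_pos_iff.2 hc1ne
  have hq12 : ¬ (q1 = 0 ∧ q2 = 0) := by
    rintro ⟨h1, h2⟩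
    apply hdet
    rw [h1, h2]
    simp
  have hc2pos : 0 < c2.length := by
    rcases Nat.eq_zero_or_pos c2.length with h0 | h0
    · exfalso
      have hnil : c2 = [] := List.length_eq_zero_iff.1 h0
      apply hdet
      have e1 : p2 = 0 := by rw [hp2, hnil]; rfl
      have e2 : q2 = 0 := by rw [hq2, hnil]; rfl
      rw [e1, e2]
      simp
    · exact h0
  have hMpos : 0 < M := by
    have h1 : q2 ≤ q2 * c1.length := Nat.le_mul_of_pos_right _ hc1pos
    have h2 : q1 ≤ q1 * c2.length := Nat.le_mul_of_pos_right _ hc2pos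
    rw [hM]; omega
  have hL0pos : 0 < L0 := by
    rw [hL0]; simp [List.length_append]; omega
  rw [Asymptotics.isBigO_iff]
  refine ⟨2 * M, ?_⟩
  rw [Filter.eventually_atTop]
  refine ⟨2 * L0 + 2, fun l hl => ?_⟩
  set K := (l - L0) / M with hK
  -- the trace family
  set mt : ℕ → List B := fun i =>
    u ++ iterTrace c1 π1 (i * q2 + 1) ++ ((w ++ iterTrace c2 π2 ((K - i) * q1)).map (π1 ^ (i * q2)))
    with hmt
  have hmtlen : ∀ i, (mt i).length = L0 + (i * q2) * c1.length + ((K - i) * q1) * c2.length :=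
    fun i => length_main u c1 w c2 π1 π2 (i * q2) ((K - i) * q1)
  have hKM : K * M ≤ l - L0 := Nat.div_mul_le_self _ _
  have hmtlen_le : ∀ i, i ≤ K → (mt i).length ≤ l := by
    intro i hi
    have h1 : i * q2 * c1.length ≤ K * (q2 * c1.length) := by
      rw [← Nat.mul_assoc]
      exact Nat.mul_le_mul_right _ (Nat.mul_le_mul_right _ hi)
    have h2 : (K - i) * q1 * c2.length ≤ K * (q1 * c2.length) := by
      rw [← Nat.mul_assoc]
      exact Nat.mul_le_mul_right _ (Nat.mul_le_mul_right _ (Nat.sub_le K i))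
    have h3 : K * (q2 * c1.length) + K * (q1 * c2.length) = K * M := by
      rw [hM, Nat.mul_add]
    have h4 := hmtlen i
    omega
  have hmtne : ∀ i, mt i ≠ [] := by
    intro i
    apply List.ne_nil_of_length_pos
    rw [hmtlen i]
    have : c1.length ≤ L0 := by rw [hL0]; simp [List.length_append]; omega
    omega
  set ft : ℕ → List B := fun i =>
    mt i ++ List.replicate (l - (mt i).length) ((mt i).getLast (hmtne i)) with hft
  have hftlen : ∀ i, i ≤ K → (ft i).length = l := by
    intro i hi
    rw [hft]
    simp only [List.length_append, List.length_replicate]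
    have := hmtlen_le i hi
    omega
  -- miss counts
  have hcut : ∀ (R : CacheAlg B) (i : ℕ), R.misses (ft i) = R.misses (mt i) := by
    intro R i
    rw [hft]
    show R.misses _ = _
    unfold CacheAlg.misses
    rw [R.missesFrom_append]
    rw [R.missesFrom_replicate _ _ (R.hasBlock_updTrace_getLast (mt i) R.initConfig (hmtne i))]
    omega
  have hPval : ∀ i, P.misses (ft i)
      = P.misses (u ++ c1 ++ w) + (i * q2) * p1 + ((K - i) * q1) * p2 := by
    intro i
    rw [hcut P i, hmt]
    exact count_main P hP u c1 w c2 π1 π2 hP1 hP2 (i * q2) ((K - i) * q1)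
  have hQval : ∀ i, Q.misses (ft i)
      = Q.misses (u ++ c1 ++ w) + (i * q2) * q1 + ((K - i) * q1) * q2 := by
    intro i
    rw [hcut Q i, hmt]
    exact count_main Q hQ u c1 w c2 π1 π2 hQ1 hQ2 (i * q2) ((K - i) * q1)
  have hQconst : ∀ i, i ≤ K → Q.misses (ft i)
      = Q.misses (u ++ c1 ++ w) + K * (q1 * q2) := by
    intro i hi
    rw [hQval i]
    obtain ⟨j, hj⟩ : ∃ j, K = i + j := ⟨K - i, by omega⟩
    rw [hj, Nat.add_sub_cancel_left]
    have : i * q2 * q1 + j * q1 * q2 = (i + j) * (q1 * q2) := by ring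
    omega
  have hPinj : ∀ i ≤ K, ∀ i' ≤ K, P.misses (ft i) = P.misses (ft i') → i = i' := by
    intro i hi i' hi' heq
    rw [hPval i, hPval i'] at heq
    have hz : ((i : ℤ) - i') * ((p1 : ℤ) * q2 - p2 * q1) = 0 := by
      have e : ((P.misses (u ++ c1 ++ w) : ℤ)) + (i * q2) * p1 + ((K : ℤ) - i) * q1 * p2
          = ((P.misses (u ++ c1 ++ w) : ℤ)) + (i' * q2) * p1 + ((K : ℤ) - i') * q1 * p2 := by
        have := heq
        zify [hi, hi'] at this
        linarith [this]
      linear_combination e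
    rcases mul_eq_zero.1 hz with h0 | h0
    · have : (i : ℤ) = i' := by linarith [h0]
      exact_mod_cast this
    · exfalso
      apply hdet
      have : (p1 : ℤ) * q2 = p2 * q1 := by linarith [h0]
      exact_mod_cast this
  -- the witness set
  set T : Finset (List B) := (Finset.range (K + 1)).image ft with hT
  have hcardP : (T.image P.misses).card = K + 1 := by
    rw [hT, Finset.image_image]
    rw [Finset.card_image_of_injOn, Finset.card_range]
    intro i hi i' hi' heq
    rw [Finset.mem_coe, Finset.mem_range] at hi hi'
    exact hPinj i (Nat.lt_succ_iff.mp hi) i' (Nat.lt_succ_iff.mp hi') heq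
  have hcardQ : (T.image Q.misses).card = 1 := by
    rw [hT, Finset.image_image]
    have : (Finset.range (K + 1)).image (Q.misses ∘ ft)
        = {Q.misses (u ++ c1 ++ w) + K * (q1 * q2)} := by
      apply Finset.eq_singleton_iff_unique_mem.2
      constructor
      · apply Finset.mem_image.2
        exact ⟨0, Finset.mem_range.2 (Nat.succ_pos K), hQconst 0 (Nat.zero_le K)⟩
      · intro x hx
        obtain ⟨i, hi, rfl⟩ := Finset.mem_image.1 hx
        rw [Finset.mem_range] at hi
        exact hQconst i (by omega)
    rw [this, Finset.card_singleton]
  have hmem : ((K + 1 : ℕ) : ℝ) ∈ {r : ℝ | ∃ T : Finset (List B), T.Nonempty ∧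
      (∀ t ∈ T, t.length = l) ∧
      r = ((T.image P.misses).card : ℝ) / ((T.image Q.misses).card : ℝ)} := by
    refine ⟨T, ?_, ?_, ?_⟩
    · rw [hT]
      exact (Finset.nonempty_range_iff.2 (Nat.succ_ne_zero K)).image _
    · intro t ht
      rw [hT, Finset.mem_image] at ht
      obtain ⟨i, hi, rfl⟩ := ht
      rw [Finset.mem_range] at hi
      exact hftlen i (Nat.lt_succ_iff.mp hi)
    · rw [hcardP, hcardQ]
      norm_num
  have hlk : ((K + 1 : ℕ) : ℝ) ≤ leakRatio P Q l :=
    le_csSup (leakRatio_bddAbove P Q l) hmem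
  -- final arithmetic
  have hlt : l - L0 < M * K + M := by
    have h1 := Nat.div_add_mod (l - L0) M
    have h2 := Nat.mod_lt (l - L0) hMpos
    rw [← hK] at h1
    omega
  have hln : l ≤ 2 * (M * K + M) := by omega
  have hnonneg : (0 : ℝ) ≤ leakRatio P Q l := le_trans (by positivity) hlk
  rw [Real.norm_eq_abs, Real.norm_eq_abs, abs_of_nonneg (by positivity : (0:ℝ) ≤ (l:ℝ)),
    abs_of_nonneg hnonneg]
  calc (l : ℝ) ≤ 2 * ((M : ℝ) * K + M) := by exact_mod_cast hln
    _ = 2 * M * ((K + 1 : ℕ) : ℝ) := by push_cast; ring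
    _ ≤ 2 * M * leakRatio P Q l := by
        apply mul_le_mul_of_nonneg_left hlk
        positivity

end Construction

section Converse
variable {P Q : CacheAlg B}

lemma card_le_of_bounded {m : ℕ}
    (hbnd : ∀ t : List B, |(P.misses t : ℤ) - (Q.misses t : ℤ)| ≤ m) (T : Finset (List B)) :
    (T.image P.misses).card ≤ (2 * m + 1) * (T.image Q.misses).card := by
  classical
  set S : Finset ℕ := ((T.image Q.misses) ×ˢ Finset.Icc (-(m:ℤ)) (m:ℤ)).image
    (fun pr : ℕ × ℤ => ((pr.1 : ℤ) + pr.2).toNat) with hS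
  have hsub : T.image P.misses ⊆ S := by
    intro x hx
    obtain ⟨t, htT, rfl⟩ := Finset.mem_image.1 hx
    apply Finset.mem_image.2
    refine ⟨(Q.misses t, (P.misses t : ℤ) - (Q.misses t : ℤ)), ?_, ?_⟩
    · rw [Finset.mem_product]
      constructor
      · exact Finset.mem_image_of_mem _ htT
      · rw [Finset.mem_Icc]
        have := abs_le.1 (hbnd t)
        exact this
    · show ((Q.misses t : ℤ) + ((P.misses t : ℤ) - (Q.misses t : ℤ))).toNat = P.misses t
      rw [add_sub_cancel]
      exact Int.toNat_natCast _
  calc (T.image P.misses).card ≤ S.card := Finset.card_le_card hsub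
    _ ≤ ((T.image Q.misses) ×ˢ Finset.Icc (-(m:ℤ)) (m:ℤ)).card := Finset.card_image_le
    _ = (T.image Q.misses).card * (Finset.Icc (-(m:ℤ)) (m:ℤ)).card := Finset.card_product _ _
    _ = (2 * m + 1) * (T.image Q.misses).card := by
        rw [Int.card_Icc]
        have : ((m : ℤ) + 1 - -(m:ℤ)).toNat = 2 * m + 1 := by omega
        rw [this, Nat.mul_comm]

lemma leakRatio_le_of_bounded [Nonempty B] {m : ℕ}
    (hbnd : ∀ t : List B, |(P.misses t : ℤ) - (Q.misses t : ℤ)| ≤ m) (l : ℕ) :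
    leakRatio P Q l ≤ 2 * m + 1 := by
  apply csSup_le ⟨1, one_mem_leakRatio_set P Q l⟩
  rintro r ⟨T, hTne, hTlen, rfl⟩
  have h1 : 1 ≤ (T.image Q.misses).card := Finset.card_pos.2 (hTne.image _)
  have h2 := card_le_of_bounded hbnd T
  rw [div_le_iff₀ (by exact_mod_cast h1 : (0:ℝ) < ((T.image Q.misses).card : ℝ))]
  calc ((T.image P.misses).card : ℝ) ≤ ((2 * m + 1) * (T.image Q.misses).card : ℕ) := by
        exact_mod_cast h2
    _ = (2 * m + 1 : ℝ) * ((T.image Q.misses).card : ℝ) := by push_cast; ring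

lemma not_isBigO_of_bounded [Nonempty B] {m : ℕ}
    (hbnd : ∀ t : List B, |(P.misses t : ℤ) - (Q.misses t : ℤ)| ≤ m) :
    ¬ ((fun l : ℕ => (l : ℝ)) =O[Filter.atTop] (leakRatio P Q)) := by
  intro hO
  rw [Asymptotics.isBigO_iff] at hO
  obtain ⟨c, hc⟩ := hO
  rw [Filter.eventually_atTop] at hc
  obtain ⟨N, hN⟩ := hc
  set l : ℕ := max N (Nat.floor (|c| * (2 * m + 1)) + 1) with hl
  have h1 := hN l (le_max_left _ _)
  have hub : leakRatio P Q l ≤ 2 * m + 1 := leakRatio_le_of_bounded hbnd l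
  have hlb : (1:ℝ) ≤ leakRatio P Q l :=
    le_csSup (leakRatio_bddAbove P Q l) (one_mem_leakRatio_set P Q l)
  rw [Real.norm_eq_abs, Real.norm_eq_abs, abs_of_nonneg (by positivity : (0:ℝ) ≤ (l:ℝ)),
    abs_of_nonneg (by linarith : (0:ℝ) ≤ leakRatio P Q l)] at h1
  have h2 : (l : ℝ) ≤ |c| * (2 * m + 1) := by
    calc (l : ℝ) ≤ c * leakRatio P Q l := h1
      _ ≤ |c| * leakRatio P Q l := by
          apply mul_le_mul_of_nonneg_right (le_abs_self c) (by linarith)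
      _ ≤ |c| * (2 * m + 1) := by
          apply mul_le_mul_of_nonneg_left hub (abs_nonneg c)
  have h3 : (Nat.floor (|c| * (2 * m + 1)) + 1 : ℕ) ≤ l := le_max_right _ _
  have h4 : |c| * (2 * m + 1) < (l : ℝ) := by
    calc |c| * (2 * m + 1) < (Nat.floor (|c| * (2 * m + 1)) + 1 : ℕ) := by
          push_cast
          exact Nat.lt_floor_add_one _
      _ ≤ (l : ℝ) := by exact_mod_cast h3
  linarith

end Converse

theorem leakRatio_linear_iff_unbounded_diff (P Q : CacheAlg B) [Infinite B]
    [Finite P.S] [Finite Q.S]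
    (hP : P.EvictBlockIndep) (hQ : Q.EvictBlockIndep) :
    (((fun l : ℕ => (l : ℝ)) =O[Filter.atTop] leakRatio P Q) ∧
     ((fun l : ℕ => (l : ℝ)) =O[Filter.atTop] leakRatio Q P)) ↔
    (∀ m : ℕ, ∃ t : List B, (m : ℤ) < |(P.misses t : ℤ) - (Q.misses t : ℤ)|) := by
  constructor
  · intro hO
    by_contra hno
    push_neg at hno
    obtain ⟨m, hm⟩ := hno
    exact not_isBigO_of_bounded hm hO.1
  · intro hRHS
    have h1 : Hyp P Q := hyp_of_unbounded P Q hP hQ hRHS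
    have hRHS' : ∀ m : ℕ, ∃ t : List B, (m : ℤ) < |(Q.misses t : ℤ) - (P.misses t : ℤ)| := by
      intro m
      obtain ⟨t, ht⟩ := hRHS m
      exact ⟨t, by rwa [abs_sub_comm]⟩
    exact ⟨isBigO_of_hyp hP hQ h1, isBigO_of_hyp hQ hP h1.symm⟩
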